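/- Let X be a strongly 0-dimensional metrizable space. Then the set of all metrics d ∈ Met(X) whose range is contained in some closed totally disconnected subset of [0,∞) containing 0 (i.e., the union over S ∈ Z of Met(X; S)) is a dense Gδ subset of the space (Met(X), D_X). -/

import Mathlib

open Set
open scoped ENNReal

/-- The space `Met(X)` of metrics generating the topology of `X`. -/
def MetricCompat (X : Type*) [t : TopologicalSpace X] : Type _ :=
  { m : MetricSpace X // m.toUniformSpace.toTopologicalSpace = t }

namespace MetricCompat

variable {X : Type*} [TopologicalSpace X]

/-- The distance function of an element of `Met(X)`. -/
noncomputable def dist (d : MetricCompat X) (x y : X) : ℝ := d.1.dist x y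

/-- The supremum distance `D_X`, valued in `[0,∞]`. -/
noncomputable def supDist (d e : MetricCompat X) : ℝ≥0∞ :=
  ⨆ p : X × X, ENNReal.ofReal |d.dist p.1 p.2 - e.dist p.1 p.2|

/-- The topology on `Met(X)` induced by the open balls of `D_X`. -/
noncomputable instance : TopologicalSpace (MetricCompat X) :=
  TopologicalSpace.generateFrom
    { U | ∃ (d : MetricCompat X) (r : ℝ≥0∞), 0 < r ∧ U = { e | supDist d e < r } }

end MetricCompat

/-- A space is strongly `0`-dimensional if disjoint closed sets are separated by a clopen set. -/
def StronglyZeroDim (X : Type*) [TopologicalSpace X] : Prop :=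
  ∀ A B : Set X, IsClosed A → IsClosed B → Disjoint A B →
    ∃ V : Set X, IsClopen V ∧ A ⊆ V ∧ Disjoint V B

/-- The collection `Z` of closed totally disconnected subsets of `[0,∞)` containing `0`. -/
def ZFamily : Set (Set ℝ) :=
  { S | S ⊆ Set.Ici 0 ∧ IsClosed S ∧ IsTotallyDisconnected S ∧ (0 : ℝ) ∈ S }

namespace MetricCompat
variable {X : Type*} [TopologicalSpace X]

lemma supDist_self (d : MetricCompat X) : supDist d d = 0 := by
  simp [supDist]

lemma supDist_triangle (d e f : MetricCompat X) :
    supDist d f ≤ supDist d e + supDist e f := by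
  refine iSup_le fun p => ?_
  calc ENNReal.ofReal |d.dist p.1 p.2 - f.dist p.1 p.2|
      ≤ ENNReal.ofReal (|d.dist p.1 p.2 - e.dist p.1 p.2| + |e.dist p.1 p.2 - f.dist p.1 p.2|) :=
        ENNReal.ofReal_le_ofReal (abs_sub_le _ _ _)
    _ ≤ ENNReal.ofReal |d.dist p.1 p.2 - e.dist p.1 p.2|
          + ENNReal.ofReal |e.dist p.1 p.2 - f.dist p.1 p.2| := ENNReal.ofReal_add_le
    _ ≤ supDist d e + supDist e f := add_le_add (le_iSup (fun q : X × X => ENNReal.ofReal |d.dist q.1 q.2 - e.dist q.1 q.2|) p) (le_iSup (fun q : X × X => ENNReal.ofReal |e.dist q.1 q.2 - f.dist q.1 q.2|) p)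

lemma exists_ball_subset {U : Set (MetricCompat X)} (hU : IsOpen U) {d : MetricCompat X}
    (hd : d ∈ U) : ∃ r : ℝ≥0∞, 0 < r ∧ ∀ e, supDist d e < r → e ∈ U := by
  induction hU with
  | basic V hV =>
    obtain ⟨d₀, r₀, hr₀, rfl⟩ := hV
    refine ⟨r₀ - supDist d₀ d, tsub_pos_of_lt hd, fun e he => ?_⟩
    have h1 : supDist d₀ e ≤ supDist d₀ d + supDist d e := supDist_triangle _ _ _
    have h2 : supDist d₀ d + supDist d e < supDist d₀ d + (r₀ - supDist d₀ d) :=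
      ENNReal.add_lt_add_left (by exact (lt_of_le_of_lt (le_refl _) hd).ne_top) he
    have h3 : supDist d₀ d + (r₀ - supDist d₀ d) = r₀ := add_tsub_cancel_of_le hd.le
    exact lt_of_le_of_lt h1 (h3 ▸ h2)
  | univ => exact ⟨1, one_pos, fun _ _ => trivial⟩
  | inter V W _ _ ihV ihW =>
    obtain ⟨r₁, hr₁, h₁⟩ := ihV hd.1
    obtain ⟨r₂, hr₂, h₂⟩ := ihW hd.2
    exact ⟨min r₁ r₂, lt_min hr₁ hr₂, fun e he =>
      ⟨h₁ e (he.trans_le (min_le_left _ _)), h₂ e (he.trans_le (min_le_right _ _))⟩⟩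
  | sUnion S hS ih =>
    obtain ⟨V, hV, hdV⟩ := hd
    obtain ⟨r, hr, h⟩ := ih V hV hdV
    exact ⟨r, hr, fun e he => ⟨V, hV, h e he⟩⟩

lemma isOpen_of_forall_ball {U : Set (MetricCompat X)}
    (h : ∀ d ∈ U, ∃ r : ℝ≥0∞, 0 < r ∧ ∀ e, supDist d e < r → e ∈ U) : IsOpen U := by
  have : U = ⋃ d : U, {e | supDist d.1 e < (h d.1 d.2).choose} := by
    ext e
    constructor
    · intro he
      exact mem_iUnion.2 ⟨⟨e, he⟩, by simpa [supDist_self] using (h e he).choose_spec.1⟩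
    · rintro he
      obtain ⟨d, hd⟩ := mem_iUnion.1 he
      exact (h d.1 d.2).choose_spec.2 e hd
  rw [this]
  exact isOpen_iUnion fun d => TopologicalSpace.isOpen_generateFrom_of_mem
    ⟨d.1, _, (h d.1 d.2).choose_spec.1, rfl⟩


lemma supDist_le {d e : MetricCompat X} {c : ℝ}
    (h : ∀ x y, |d.dist x y - e.dist x y| ≤ c) : supDist d e ≤ ENNReal.ofReal c :=
  iSup_le fun p => ENNReal.ofReal_le_ofReal (h p.1 p.2)

lemma abs_lt_of_supDist_lt {d e : MetricCompat X} {c : ℝ}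
    (h : supDist d e < ENNReal.ofReal c) (x y : X) : |d.dist x y - e.dist x y| < c := by
  have h0 : (0:ℝ) < c := by
    by_contra hc
    simp [ENNReal.ofReal_eq_zero.2 (not_lt.1 hc)] at h
  have := lt_of_le_of_lt
    (le_iSup (fun q : X × X => ENNReal.ofReal |d.dist q.1 q.2 - e.dist q.1 q.2|) (x, y)) h
  exact (ENNReal.ofReal_lt_ofReal_iff h0).1 this

end MetricCompat

section Gdelta
variable {X : Type*} [TopologicalSpace X]

/-- The open set of metrics avoiding some subinterval of `(p, q)`. -/
def gapSet (p q : ℚ) : Set (MetricCompat X) :=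
  {d | ∃ a b : ℝ, (p:ℝ) ≤ a ∧ a < b ∧ b ≤ (q:ℝ) ∧ ∀ x y : X, d.dist x y ∉ Ioo a b}

lemma isOpen_gapSet (p q : ℚ) : IsOpen (gapSet (X := X) p q) := by
  refine MetricCompat.isOpen_of_forall_ball fun d hd => ?_
  obtain ⟨a, b, hpa, hab, hbq, hav⟩ := hd
  refine ⟨ENNReal.ofReal ((b - a)/3), ENNReal.ofReal_pos.2 (by linarith), fun e he => ?_⟩
  refine ⟨a + (b-a)/3, b - (b-a)/3, by linarith, by linarith, by linarith, fun x y hxy => ?_⟩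
  have habs := MetricCompat.abs_lt_of_supDist_lt he x y
  have h1 : d.dist x y ∈ Ioo a b := by
    rw [abs_lt] at habs
    constructor <;> [skip; skip] <;> cases hxy with
    | intro h2 h3 => linarith
  exact hav x y h1

lemma exists_gap {S : Set ℝ} (hcl : IsClosed S) (htd : IsTotallyDisconnected S)
    {p q : ℝ} (hpq : p < q) :
    ∃ a b : ℝ, p ≤ a ∧ a < b ∧ b ≤ q ∧ Ioo a b ∩ S = ∅ := by
  have hex : ∃ t, t ∈ Ioo p q ∧ t ∉ S := by
    by_contra h
    push_neg at h
    have hsub : Ioo p q ⊆ S := fun t ht => h t ht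
    obtain ⟨t₁, ht₁⟩ := exists_between hpq
    obtain ⟨t₂, ht₂⟩ := exists_between ht₁.2
    have hsing := htd (Ioo p q) hsub isPreconnected_Ioo
    exact absurd (hsing ⟨ht₁.1, ht₂.1.trans ht₂.2⟩ ⟨ht₁.1.trans ht₂.1, ht₂.2⟩)
      (ne_of_lt ht₂.1)
  obtain ⟨t, htpq, htS⟩ := hex
  obtain ⟨δ, hδ, hball⟩ := Metric.isOpen_iff.1 hcl.isOpen_compl t htS
  refine ⟨max p (t - δ), min q (t + δ), le_max_left _ _, ?_, min_le_left _ _, ?_⟩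
  · exact max_lt (lt_min hpq (by linarith [htpq.1])) (lt_min (by linarith [htpq.2]) (by linarith))
  · ext s
    simp only [mem_inter_iff, mem_Ioo, mem_empty_iff_false, iff_false, not_and, and_imp]
    intro hs1 hs2 hsS
    have h1 : t - δ < s := lt_of_le_of_lt (le_max_right _ _) hs1
    have h2 : s < t + δ := lt_of_lt_of_le hs2 (min_le_right _ _)
    have : s ∈ Metric.ball t δ := by
      rw [Metric.mem_ball, Real.dist_eq, abs_lt]
      constructor <;> linarith
    exact hball this hsS

end Gdelta

section Gdelta2
variable {X : Type*} [TopologicalSpace X]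

/-- Index type for the countable intersection. -/
abbrev GapIdx : Type := {pq : ℚ × ℚ // 0 ≤ pq.1 ∧ pq.1 < pq.2}

lemma dist_nonneg' (d : MetricCompat X) (x y : X) : 0 ≤ d.dist x y := by
  letI := d.1
  exact dist_nonneg

lemma target_eq :
    {d : MetricCompat X | ∃ S ∈ ZFamily, ∀ x y : X, d.dist x y ∈ S}
      = ⋂ i : GapIdx, gapSet (X := X) i.1.1 i.1.2 := by
  ext d
  constructor
  · rintro ⟨S, ⟨hS0, hScl, hStd, hS0'⟩, hval⟩
    refine mem_iInter.2 fun i => ?_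
    have hpq : ((i.1.1 : ℝ)) < (i.1.2 : ℝ) := by exact_mod_cast i.2.2
    obtain ⟨a, b, hpa, hab, hbq, hgap⟩ := exists_gap hScl hStd hpq
    exact ⟨a, b, hpa, hab, hbq, fun x y hmem =>
      (eq_empty_iff_forall_notMem.1 hgap _) ⟨hmem, hval x y⟩⟩
  · intro hd
    set V : Set ℝ := {0} ∪ {t | ∃ x y : X, d.dist x y = t} with hV
    have hV0 : V ⊆ Ici 0 := by
      rintro t (rfl | ⟨x, y, rfl⟩)
      · exact mem_Ici.2 (le_refl 0)
      · exact mem_Ici.2 (dist_nonneg' d x y)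
    refine ⟨closure V, ⟨closure_minimal hV0 isClosed_Ici, isClosed_closure, ?_,
      subset_closure (Or.inl rfl)⟩, fun x y => subset_closure (Or.inr ⟨x, y, rfl⟩)⟩
    intro T hTS hTpre u hu v hv
    have key : ∀ a b, a ∈ T → b ∈ T → ¬ a < b := by
      intro a b ha hb hab
      have ha0 : (0:ℝ) ≤ a := closure_minimal hV0 isClosed_Ici (hTS ha)
      obtain ⟨p, hp⟩ := exists_rat_btwn hab
      obtain ⟨q, hq⟩ := exists_rat_btwn hp.2
      have hp0 : (0:ℚ) ≤ p := by exact_mod_cast ha0.trans hp.1.le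
      have hpq : p < q := by exact_mod_cast hq.1
      have hdi := mem_iInter.1 hd ⟨(p, q), hp0, hpq⟩
      obtain ⟨x1, x2, hpa, hab', hbq, hgap⟩ := hdi
      set m := (x1 + x2)/2 with hm
      have hm1 : x1 < m := by simp only [hm]; linarith
      have hm2 : m < x2 := by simp only [hm]; linarith
      have hmT : m ∈ T := hTpre.Icc_subset ha hb ⟨by linarith [hp.1], by linarith [hq.2]⟩
      have hmS : m ∈ closure V := hTS hmT
      obtain ⟨z, hz1, hz2⟩ := (_root_.mem_closure_iff.1 hmS) (Ioo x1 x2) isOpen_Ioo ⟨hm1, hm2⟩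
      rcases hz2 with rfl | ⟨x, y, rfl⟩
      · have h0x1 : (0:ℝ) < x1 := lt_of_lt_of_le (lt_of_le_of_lt ha0 hp.1) hpa
        exact absurd hz1.1 (by linarith)
      · exact hgap x y hz1
    rcases lt_trichotomy u v with h | h | h
    · exact absurd h (key u v hu hv)
    · exact h
    · exact absurd h (key v u hv hu)

end Gdelta2

section Partition
variable {X : Type*} [MetricSpace X]

lemma exists_clopen_partition (hX : StronglyZeroDim X) {δ : ℝ} (hδ : 0 < δ) :
    ∃ P : X → Set X, (∀ x, x ∈ P x) ∧ (∀ x, IsClopen (P x)) ∧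
      (∀ x, ∀ y ∈ P x, ∀ z ∈ P x, Dist.dist y z ≤ δ) ∧
      (∀ x y, y ∈ P x → P y = P x) := by
  have hcov : ⋃ x : X, Metric.ball x (δ/2) = univ :=
    eq_univ_iff_forall.2 fun x => mem_iUnion.2 ⟨x, Metric.mem_ball_self (half_pos hδ)⟩
  obtain ⟨v, vo, vU, vlf, vsub⟩ :=
    precise_refinement (fun x : X => Metric.ball x (δ/2)) (fun _ => Metric.isOpen_ball) hcov
  obtain ⟨w, wU, wo, wcl⟩ := exists_iUnion_eq_closure_subset vo (fun x => vlf.point_finite x) vU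
  have hsep : ∀ i, ∃ G, IsClopen G ∧ closure (w i) ⊆ G ∧ G ⊆ v i := by
    intro i
    obtain ⟨G, hG, h1, h2⟩ := hX (closure (w i)) (v i)ᶜ isClosed_closure
      (vo i).isClosed_compl (Set.disjoint_left.2 fun a ha hc => hc (wcl i ha))
    exact ⟨G, hG, h1, fun a ha => by_contra fun h => Set.disjoint_left.1 h2 ha h⟩
  choose G hGclopen hGw hGv using hsep
  have hGlf : LocallyFinite G := vlf.subset hGv
  have hGcov : ∀ x : X, x ∈ ⋃ i, G i := by
    intro x
    have := wU ▸ mem_univ x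
    obtain ⟨i, hi⟩ := mem_iUnion.1 this
    exact mem_iUnion.2 ⟨i, hGw i (subset_closure hi)⟩
  set r : X → X → Prop := WellOrderingRel with hr
  have hwf : WellFounded r := (WellOrderingRel.isWellOrder).wf
  set W : X → Set X := fun i => G i \ ⋃ j : {j // r j i}, G j.1 with hW
  have hWclopen : ∀ i, IsClopen (W i) := by
    intro i
    have hcl : IsClosed (⋃ j : {j // r j i}, G j.1) :=
      (hGlf.comp_injective Subtype.val_injective).isClosed_iUnion
        fun j => (hGclopen j.1).isClosed
    have hop : IsOpen (⋃ j : {j // r j i}, G j.1) :=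
      isOpen_iUnion fun j => (hGclopen j.1).isOpen
    exact ⟨(hGclopen i).isClosed.sdiff hop, (hGclopen i).isOpen.sdiff hcl⟩
  have hne : ∀ x : X, {i | x ∈ G i}.Nonempty := fun x => mem_iUnion.1 (hGcov x)
  set μ : X → X := fun x => hwf.min {i | x ∈ G i} (hne x) with hμ
  have hμmem : ∀ x, x ∈ G (μ x) := fun x => hwf.min_mem _ (hne x)
  have hμnot : ∀ x j, r j (μ x) → x ∉ G j := by
    intro x j hj hxj
    exact hwf.not_lt_min {i | x ∈ G i} hxj hj
  have hμW : ∀ x, x ∈ W (μ x) := by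
    intro x
    refine ⟨hμmem x, fun hx => ?_⟩
    obtain ⟨j, hj⟩ := mem_iUnion.1 hx
    exact hμnot x j.1 j.2 hj
  have hkey : ∀ i y, y ∈ W i → μ y = i := by
    intro i y hy
    have h1 : ¬ r i (μ y) := hwf.not_lt_min {j | y ∈ G j} hy.1
    have h2 : ¬ r (μ y) i := by
      intro hlt
      exact hy.2 (mem_iUnion.2 ⟨⟨μ y, hlt⟩, hμmem y⟩)
    rcases trichotomous_of r (μ y) i with h | h | h
    · exact absurd h h2
    · exact h
    · exact absurd h h1
  refine ⟨fun x => W (μ x), hμW, fun x => hWclopen _, ?_, ?_⟩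
  · intro x y hy z hz
    have hyb : y ∈ Metric.ball (μ x) (δ/2) := vsub _ (hGv _ hy.1)
    have hzb : z ∈ Metric.ball (μ x) (δ/2) := vsub _ (hGv _ hz.1)
    rw [Metric.mem_ball] at hyb hzb
    calc Dist.dist y z ≤ Dist.dist y (μ x) + Dist.dist (μ x) z := dist_triangle _ _ _
      _ ≤ δ := by rw [dist_comm (μ x) z] at *; linarith
  · intro x y hy
    show W (μ y) = W (μ x)
    rw [hkey (μ x) y hy]

end Partition

section Construction
variable {X : Type*} [MetricSpace X]

lemma exists_nested_partition (hX : StronglyZeroDim X) {ε : ℝ} (hε : 0 < ε) :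
    ∃ P : ℕ → X → Set X, (∀ n x, x ∈ P n x) ∧ (∀ n x, IsClopen (P n x)) ∧
      (∀ n x, ∀ y ∈ P n x, ∀ z ∈ P n x, Dist.dist y z ≤ ε / 2^n) ∧
      (∀ n x y, y ∈ P n x → P n y = P n x) ∧
      (∀ x : X, ∀ {m n : ℕ}, m ≤ n → P n x ⊆ P m x) := by
  have h : ∀ n : ℕ, ∃ Q : X → Set X, (∀ x, x ∈ Q x) ∧ (∀ x, IsClopen (Q x)) ∧
      (∀ x, ∀ y ∈ Q x, ∀ z ∈ Q x, Dist.dist y z ≤ ε / 2^n) ∧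
      (∀ x y, y ∈ Q x → Q y = Q x) :=
    fun n => exists_clopen_partition hX (by positivity)
  choose Q hQ1 hQ2 hQ3 hQ4 using h
  refine ⟨fun n x => ⋂ m ∈ Finset.range (n+1), Q m x, ?_, ?_, ?_, ?_, ?_⟩
  · exact fun n x => mem_iInter₂.2 fun m _ => hQ1 m x
  · exact fun n x => isClopen_biInter_finset fun m _ => hQ2 m x
  · intro n x y hy z hz
    have hy' : y ∈ Q n x := mem_iInter₂.1 hy n (Finset.mem_range.2 (Nat.lt_succ_self n))
    have hz' : z ∈ Q n x := mem_iInter₂.1 hz n (Finset.mem_range.2 (Nat.lt_succ_self n))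
    exact hQ3 n x y hy' z hz'
  · intro n x y hy
    have : ∀ m ∈ Finset.range (n+1), Q m y = Q m x := fun m hm =>
      hQ4 m x y (mem_iInter₂.1 hy m hm)
    exact iInter₂_congr this
  · intro x m n hmn
    exact fun y hy => mem_iInter₂.2 fun k hk =>
      mem_iInter₂.1 hy k (Finset.mem_range.2 ((Finset.mem_range.1 hk).trans_le (by omega)))

end Construction

/-- The totally disconnected target set for the range. -/
def TDSet (ε : ℝ) : Set ℝ :=
  {0} ∪ (Set.range fun n : ℕ => ε / 2^n) ∪ (Set.range fun k : ℕ => ε * (k+1))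

section Construction2
variable {X : Type*} [MetricSpace X]

open Classical in
lemma exists_close_dist (hX : StronglyZeroDim X) [Nonempty X] {ε : ℝ} (hε : 0 < ε) :
    ∃ e : X → X → ℝ,
      (∀ x, e x x = 0) ∧ (∀ x y, e x y = e y x) ∧
      (∀ x y z, e x z ≤ e x y + e y z) ∧ (∀ x y, e x y = 0 → x = y) ∧
      (∀ x y, |e x y - Dist.dist x y| ≤ 4*ε) ∧
      (∀ x y, e x y ∈ TDSet ε) ∧
      (∀ s : Set X, IsOpen s ↔ ∀ x ∈ s, ∃ δ > 0, ∀ y, e x y < δ → y ∈ s) := by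
  obtain ⟨P, hP1, hP2, hP3, hP4, hP5⟩ := exists_nested_partition hX hε
  -- small powers
  have hpow : ∀ c : ℝ, 0 < c → ∃ n : ℕ, ε / 2^n < c := by
    intro c hc
    obtain ⟨n, hn⟩ := exists_pow_lt_of_lt_one (div_pos hc hε) (by norm_num : (1:ℝ)/2 < 1)
    refine ⟨n, ?_⟩
    have h2 : ((1:ℝ)/2)^n = 1/2^n := by rw [div_pow, one_pow]
    rw [h2] at hn
    calc ε / 2^n = ε * (1/2^n) := by ring
      _ < ε * (c/ε) := mul_lt_mul_of_pos_left hn hε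
      _ = c := by field_simp
  have hNex : ∀ x y, x ≠ y → ∃ n, P n x ≠ P n y := by
    intro x y hxy
    have hd : 0 < Dist.dist x y := dist_pos.2 hxy
    obtain ⟨n, hn⟩ := hpow _ hd
    refine ⟨n, fun hPn => ?_⟩
    have hy : y ∈ P n x := hPn ▸ hP1 n y
    have := hP3 n x x (hP1 n x) y hy
    linarith
  set rep : X → X := fun x => Classical.epsilon (· ∈ P 0 x) with hrepdef
  have hrep : ∀ x, rep x ∈ P 0 x := fun x => Classical.epsilon_spec ⟨x, hP1 0 x⟩
  have hrepcongr : ∀ x y, P 0 x = P 0 y → rep x = rep y := by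
    intro x y h
    show Classical.epsilon (· ∈ P 0 x) = Classical.epsilon (· ∈ P 0 y)
    rw [h]
  set e : X → X → ℝ := fun x y =>
    if hxy : x = y then 0
    else if P 0 x = P 0 y then ε / 2 ^ (Nat.find (hNex x y hxy) - 1)
    else ε * (1 + (⌈Dist.dist (rep x) (rep y) / ε⌉ : ℝ)) with hedef
  have hself : ∀ x, e x x = 0 := fun x => dif_pos rfl
  have hsame : ∀ x y (hxy : x ≠ y), P 0 x = P 0 y →
      e x y = ε / 2 ^ (Nat.find (hNex x y hxy) - 1) := by
    intro x y hxy h0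
    show dite _ _ _ = _
    rw [dif_neg hxy, if_pos h0]
  have hdiff : ∀ x y, x ≠ y → ¬ (P 0 x = P 0 y) →
      e x y = ε * (1 + (⌈Dist.dist (rep x) (rep y) / ε⌉ : ℝ)) := by
    intro x y hxy h0
    show dite _ _ _ = _
    rw [dif_neg hxy, if_neg h0]
  have hmono : ∀ {k l : ℕ}, k ≤ l → ε / 2^l ≤ ε / 2^k := by
    intro k l hkl
    apply div_le_div_of_nonneg_left hε.le (by positivity)
    exact pow_le_pow_right₀ one_le_two hkl
  have hfind_pos : ∀ x y (hxy : x ≠ y), P 0 x = P 0 y → 1 ≤ Nat.find (hNex x y hxy) := by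
    intro x y hxy h0
    rcases Nat.eq_zero_or_pos (Nat.find (hNex x y hxy)) with h | h
    · exact absurd h0 (Nat.find_eq_zero _ |>.1 h)
    · exact h
  have hsame_le : ∀ x y (hxy : x ≠ y) (h0 : P 0 x = P 0 y), e x y ≤ ε := by
    intro x y hxy h0
    rw [hsame x y hxy h0]
    exact div_le_self hε.le (one_le_pow₀ one_le_two)
  have hdist_le : ∀ x y (hxy : x ≠ y) (h0 : P 0 x = P 0 y), Dist.dist x y ≤ e x y := by
    intro x y hxy h0
    rw [hsame x y hxy h0]
    set N := Nat.find (hNex x y hxy) with hN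
    have h1 : N - 1 < N := Nat.sub_lt (hfind_pos x y hxy h0) one_pos
    have h2 : P (N-1) x = P (N-1) y := by
      by_contra h
      exact Nat.find_min (hNex x y hxy) h1 h
    have hy : y ∈ P (N-1) x := h2 ▸ hP1 (N-1) y
    exact hP3 (N-1) x x (hP1 (N-1) x) y hy
  have hdiff_ge : ∀ x y, x ≠ y → ¬ (P 0 x = P 0 y) → ε ≤ e x y := by
    intro x y hxy h0
    rw [hdiff x y hxy h0]
    have h1 : (0:ℝ) ≤ (⌈Dist.dist (rep x) (rep y) / ε⌉ : ℝ) := by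
      exact_mod_cast Int.ceil_nonneg (by positivity)
    nlinarith
  have hnonneg : ∀ x y, 0 ≤ e x y := by
    intro x y
    by_cases hxy : x = y
    · rw [hxy, hself]
    by_cases h0 : P 0 x = P 0 y
    · rw [hsame x y hxy h0]; positivity
    · linarith [hdiff_ge x y hxy h0]
  have hcomm : ∀ x y, e x y = e y x := by
    intro x y
    by_cases hxy : x = y
    · rw [hxy]
    have hyx : y ≠ x := Ne.symm hxy
    by_cases h0 : P 0 x = P 0 y
    · have hfs : Nat.find (hNex x y hxy) = Nat.find (hNex y x hyx) :=
        le_antisymm (Nat.find_le (Ne.symm (Nat.find_spec (hNex y x hyx))))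
          (Nat.find_le (Ne.symm (Nat.find_spec (hNex x y hxy))))
      rw [hsame x y hxy h0, hsame y x hyx h0.symm, hfs]
    · rw [hdiff x y hxy h0, hdiff y x hyx (fun h => h0 h.symm), dist_comm]
  have heq0 : ∀ x y, e x y = 0 → x = y := by
    intro x y h
    by_contra hxy
    by_cases h0 : P 0 x = P 0 y
    · rw [hsame x y hxy h0] at h
      exact absurd h (by positivity)
    · linarith [hdiff_ge x y hxy h0]
  have htri : ∀ x y z, e x z ≤ e x y + e y z := by
    intro x y z
    by_cases hxz : x = z
    · rw [hxz, hself]; exact add_nonneg (hnonneg z y) (hnonneg y z)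
    by_cases hxy : x = y
    · rw [hxy, hself, zero_add]
    by_cases hyz : y = z
    · rw [hyz, hself, add_zero]
    by_cases p1 : P 0 x = P 0 y <;> by_cases p2 : P 0 y = P 0 z
    · -- all same part
      have p3 : P 0 x = P 0 z := p1.trans p2
      rw [hsame x z hxz p3, hsame x y hxy p1, hsame y z hyz p2]
      set Nxy := Nat.find (hNex x y hxy) with hNxy
      set Nyz := Nat.find (hNex y z hyz) with hNyz
      set Nxz := Nat.find (hNex x z hxz) with hNxz
      have hminle : min Nxy Nyz ≤ Nxz := by
        rw [hNxz, Nat.le_find_iff]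
        intro m hm
        have h1 : P m x = P m y :=
          not_ne_iff.1 (Nat.find_min (hNex x y hxy) (hm.trans_le (min_le_left _ _)))
        have h2 : P m y = P m z :=
          not_ne_iff.1 (Nat.find_min (hNex y z hyz) (hm.trans_le (min_le_right _ _)))
        exact not_ne_iff.2 (h1.trans h2)
      rcases le_total Nxy Nyz with h | h
      · have hle : ε / 2 ^ (Nxz - 1) ≤ ε / 2 ^ (Nxy - 1) :=
          hmono (Nat.sub_le_sub_right ((min_eq_left h ▸ hminle :)) 1)
        have hpos : (0:ℝ) ≤ ε / 2 ^ (Nyz - 1) := by positivity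
        linarith
      · have hle : ε / 2 ^ (Nxz - 1) ≤ ε / 2 ^ (Nyz - 1) :=
          hmono (Nat.sub_le_sub_right ((min_eq_right h ▸ hminle :)) 1)
        have hpos : (0:ℝ) ≤ ε / 2 ^ (Nxy - 1) := by positivity
        linarith
    · -- x,y same; y,z different
      have p3 : ¬ P 0 x = P 0 z := fun h => p2 (p1.symm.trans h)
      rw [hdiff x z hxz p3, hdiff y z hyz p2, hrepcongr x y p1]
      linarith [hnonneg x y]
    · -- x,y different; y,z same
      have p3 : ¬ P 0 x = P 0 z := fun h => p1 (h.trans p2.symm)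
      rw [hdiff x z hxz p3, hdiff x y hxy p1, ← hrepcongr y z p2]
      linarith [hnonneg y z]
    · by_cases p3 : P 0 x = P 0 z
      · have h1 := hsame_le x z hxz p3
        have h2 := hdiff_ge x y hxy p1
        linarith [hnonneg y z]
      · rw [hdiff x z hxz p3, hdiff x y hxy p1, hdiff y z hyz p2]
        set a := Dist.dist (rep x) (rep z)
        set b := Dist.dist (rep x) (rep y)
        set c := Dist.dist (rep y) (rep z)
        have htri' : a ≤ b + c := dist_triangle _ _ _
        have hc1 : ⌈a/ε⌉ ≤ ⌈b/ε⌉ + ⌈c/ε⌉ := by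
          have h1 : ⌈a/ε⌉ ≤ ⌈b/ε + c/ε⌉ := by
            apply Int.ceil_le_ceil
            rw [← add_div]
            gcongr
          exact h1.trans (Int.ceil_add_le _ _)
        have hc2 : ((⌈a/ε⌉ : ℝ)) ≤ (⌈b/ε⌉ : ℝ) + (⌈c/ε⌉ : ℝ) := by exact_mod_cast hc1
        nlinarith [hε.le]
  have hclose : ∀ x y, |e x y - Dist.dist x y| ≤ 4*ε := by
    intro x y
    by_cases hxy : x = y
    · rw [hxy, hself, dist_self]
      simp only [sub_zero, abs_zero]
      linarith
    by_cases h0 : P 0 x = P 0 y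
    · have h1 := hdist_le x y hxy h0
      have h2 := hsame_le x y hxy h0
      have h3 : 0 ≤ Dist.dist x y := dist_nonneg
      rw [abs_le]
      constructor <;> linarith
    · rw [hdiff x y hxy h0]
      set t := Dist.dist (rep x) (rep y) with ht
      have hx1 : Dist.dist (rep x) x ≤ ε := by
        have := hP3 0 x (rep x) (hrep x) x (hP1 0 x)
        simpa using this
      have hy1 : Dist.dist y (rep y) ≤ ε := by
        have := hP3 0 y y (hP1 0 y) (rep y) (hrep y)
        simpa using this
      have ht1 : t ≤ Dist.dist x y + 2*ε := by
        have h := dist_triangle4 (rep x) x y (rep y)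
        rw [← ht] at h
        linarith
      have ht2 : Dist.dist x y ≤ t + 2*ε := by
        have h := dist_triangle4 x (rep x) (rep y) y
        have hxx : Dist.dist x (rep x) = Dist.dist (rep x) x := dist_comm _ _
        have hyy : Dist.dist (rep y) y = Dist.dist y (rep y) := dist_comm _ _
        rw [← ht, hxx, hyy] at h
        linarith
      have hceil1 : (⌈t/ε⌉ : ℝ) < t/ε + 1 := Int.ceil_lt_add_one _
      have hceil2 : t/ε ≤ (⌈t/ε⌉ : ℝ) := Int.le_ceil _
      have htdiv : ε * (t/ε) = t := by field_simp
      rw [abs_le]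
      constructor <;> nlinarith
  have hrange : ∀ x y, e x y ∈ TDSet ε := by
    intro x y
    by_cases hxy : x = y
    · rw [hxy, hself]
      exact Or.inl (Or.inl rfl)
    by_cases h0 : P 0 x = P 0 y
    · rw [hsame x y hxy h0]
      exact Or.inl (Or.inr ⟨Nat.find (hNex x y hxy) - 1, rfl⟩)
    · rw [hdiff x y hxy h0]
      have hnn : (0:ℤ) ≤ ⌈Dist.dist (rep x) (rep y) / ε⌉ := Int.ceil_nonneg (by positivity)
      refine Or.inr ⟨(⌈Dist.dist (rep x) (rep y) / ε⌉).toNat, ?_⟩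
      have hc : ((⌈Dist.dist (rep x) (rep y) / ε⌉.toNat : ℕ) : ℝ)
          = ((⌈Dist.dist (rep x) (rep y) / ε⌉ : ℤ) : ℝ) := by
        exact_mod_cast Int.toNat_of_nonneg hnn
      show ε * (_ + 1) = _
      rw [hc]
      ring
  have hL1 : ∀ (n : ℕ) x y, y ∈ P n x → e x y ≤ ε / 2^n := by
    intro n x y hy
    by_cases hxy : x = y
    · rw [hxy, hself]; positivity
    have h0 : P 0 x = P 0 y := (hP4 0 x y (hP5 x (Nat.zero_le n) hy)).symm
    rw [hsame x y hxy h0]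
    have hfind : n < Nat.find (hNex x y hxy) := by
      rw [Nat.lt_find_iff]
      intro m hm
      exact not_ne_iff.2 (hP4 m x y (hP5 x hm hy)).symm
    exact hmono (by omega)
  have hL2 : ∀ (n : ℕ) x y, e x y < ε / 2^n → y ∈ P n x := by
    intro n x y hlt
    by_cases hxy : x = y
    · rw [hxy]; exact hP1 n y
    by_cases h0 : P 0 x = P 0 y
    · rw [hsame x y hxy h0] at hlt
      have h2 : (2:ℝ)^n < 2^(Nat.find (hNex x y hxy) - 1) := by
        have h3 := (div_lt_div_iff_of_pos_left hε (by positivity) (by positivity)).1 hlt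
        exact h3
      have hn : n < Nat.find (hNex x y hxy) - 1 :=
        (pow_lt_pow_iff_right₀ one_lt_two).1 h2
      have := not_ne_iff.1 (Nat.find_min (hNex x y hxy) (m := n) (by omega))
      exact this ▸ hP1 n y
    · exfalso
      have h1 := hdiff_ge x y hxy h0
      have h2 : ε / 2^n ≤ ε := div_le_self hε.le (one_le_pow₀ one_le_two)
      linarith
  refine ⟨e, hself, hcomm, htri, heq0, hclose, hrange, fun s => ⟨?_, ?_⟩⟩
  · intro hs x hx
    obtain ⟨γ, hγ, hball⟩ := Metric.isOpen_iff.1 hs x hx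
    obtain ⟨n, hn⟩ := hpow γ hγ
    refine ⟨ε / 2^n, by positivity, fun y hy => ?_⟩
    have hyP := hL2 n x y hy
    have hd := hP3 n x x (hP1 n x) y hyP
    exact hball (by rw [Metric.mem_ball, dist_comm]; linarith)
  · intro h
    rw [isOpen_iff_mem_nhds]
    intro x hx
    obtain ⟨δ, hδ, hsub⟩ := h x hx
    obtain ⟨n, hn⟩ := hpow δ hδ
    refine mem_nhds_iff.2 ⟨P n x, fun y hy => hsub y ?_, (hP2 n x).isOpen, hP1 n x⟩
    exact lt_of_le_of_lt (hL1 n x y hy) hn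

end Construction2
lemma exists_div_pow_lt {ε c : ℝ} (hε : 0 < ε) (hc : 0 < c) : ∃ n : ℕ, ε/2^n < c := by
  obtain ⟨n, hn⟩ := exists_pow_lt_of_lt_one (div_pos hc hε) (by norm_num : (1:ℝ)/2 < 1)
  refine ⟨n, ?_⟩
  have h2 : ((1:ℝ)/2)^n = 1/2^n := by rw [div_pow, one_pow]
  rw [h2] at hn
  calc ε / 2^n = ε * (1/2^n) := by ring
    _ < ε * (c/ε) := mul_lt_mul_of_pos_left hn hε
    _ = c := by field_simp

lemma div_pow_mono {ε : ℝ} (hε : 0 < ε) {k l : ℕ} (h : k ≤ l) : ε/2^l ≤ ε/2^k := by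
  apply div_le_div_of_nonneg_left hε.le (by positivity)
  exact pow_le_pow_right₀ one_le_two h

lemma countable_isTotallyDisconnected {S : Set ℝ} (hS : S.Countable) :
    IsTotallyDisconnected S := by
  intro T hTS hT x hx y hy
  by_contra hne
  have key : ∀ a b : ℝ, a ∈ T → b ∈ T → a < b → False := by
    intro a b ha hb hab
    have hIcc : Icc a b ⊆ T := hT.Icc_subset ha hb
    have hcount : (Icc a b).Countable := hS.mono (hIcc.trans hTS)
    have hcard := Cardinal.mk_Icc_real hab
    have := hcount.le_aleph0
    rw [hcard] at this
    exact absurd this Cardinal.aleph0_lt_continuum.not_ge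
  rcases lt_trichotomy x y with h | h | h
  · exact key x y hx hy h
  · exact hne h
  · exact key y x hy hx h

lemma TDSet_mem_ZFamily {ε : ℝ} (hε : 0 < ε) : TDSet ε ∈ ZFamily := by
  refine ⟨?_, ?_, ?_, Or.inl (Or.inl rfl)⟩
  · rintro t ((rfl | ⟨n, rfl⟩) | ⟨k, rfl⟩)
    · exact mem_Ici.2 le_rfl
    · exact mem_Ici.2 (by positivity)
    · exact mem_Ici.2 (by positivity)
  · rw [← isOpen_compl_iff]
    rw [Metric.isOpen_iff]
    intro t ht
    rcases lt_trichotomy t 0 with h | h | h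
    · refine ⟨-t, by linarith, fun s hs hsT => ?_⟩
      rw [Metric.mem_ball, Real.dist_eq, abs_lt] at hs
      have hs0 : (0:ℝ) ≤ s := by
        rcases hsT with (rfl | ⟨n, rfl⟩) | ⟨k, rfl⟩
        · exact le_refl 0
        · positivity
        · positivity
      
      linarith
    · exact absurd (show t ∈ TDSet ε from Or.inl (Or.inl h)) ht
    rcases lt_or_ge t ε with h1 | h1
    · -- 0 < t < ε
      have hex : ∃ n : ℕ, ε/2^n < t := exists_div_pow_lt hε h
      classical
      set n := Nat.find hex with hn
      have hlt : ε/2^n < t := Nat.find_spec hex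
      have hge : ∀ m < n, t ≤ ε/2^m := fun m hm => le_of_not_gt (Nat.find_min hex hm)
      have hn1 : 1 ≤ n := by
        rcases Nat.eq_zero_or_pos n with h0 | h0
        · exfalso; rw [h0] at hlt; simp at hlt; linarith
        · exact h0
      have hb : t ≤ ε/2^(n-1) := hge (n-1) (by omega)
      have hbne : t ≠ ε/2^(n-1) := by
        intro habs
        exact ht (Or.inl (Or.inr ⟨n-1, habs.symm⟩))
      have hb' : t < ε/2^(n-1) := lt_of_le_of_ne hb hbne
      refine ⟨min (t - ε/2^n) (ε/2^(n-1) - t), by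
        apply lt_min <;> linarith, fun s hs hsT => ?_⟩
      rw [Metric.mem_ball, Real.dist_eq, abs_lt] at hs
      have hs1 : ε/2^n < s := by
        have := hs.1
        have h2 := min_le_left (t - ε/2^n) (ε/2^(n-1) - t)
        linarith
      have hs2 : s < ε/2^(n-1) := by
        have := hs.2
        have h2 := min_le_right (t - ε/2^n) (ε/2^(n-1) - t)
        linarith
      rcases hsT with (rfl | ⟨m, rfl⟩) | ⟨k, rfl⟩
      · have : (0:ℝ) < ε/2^n := by positivity
        linarith
      · rcases le_or_gt n m with hm | hm
        · have := div_pow_mono hε hm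
          linarith
        · have : ε/2^m ≥ ε/2^(n-1) := div_pow_mono hε (by omega)
          linarith
      · have hk : ε ≤ ε*(k+1) := by nlinarith [Nat.cast_nonneg (α := ℝ) k]
        have : ε/2^(n-1) ≤ ε := div_le_self hε.le (one_le_pow₀ one_le_two)
        linarith
    · -- ε ≤ t
      set k := ⌊t/ε⌋₊ with hk
      have hk1 : 1 ≤ k := by
        have h1' : (1:ℝ) ≤ t/ε := (le_div_iff₀ hε).2 (by linarith)
        exact Nat.le_floor (by exact_mod_cast h1')
      have hfl : (k:ℝ) ≤ t/ε := Nat.floor_le (by positivity)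
      have hfu : t/ε < k + 1 := Nat.lt_floor_add_one _
      have hlow : ε*k ≤ t := by
        have := mul_le_mul_of_nonneg_left hfl hε.le
        rwa [mul_div_cancel₀ _ hε.ne'] at this
      have hup : t < ε*(k+1) := by
        have := mul_lt_mul_of_pos_left hfu hε
        rwa [mul_div_cancel₀ _ hε.ne'] at this
      have hne : t ≠ ε*k := by
        intro habs
        refine ht (Or.inr ⟨k-1, ?_⟩)
        show ε * (((k-1 : ℕ) : ℝ) + 1) = t
        rw [habs, Nat.cast_sub hk1]
        push_cast
        ring
      have hlow' : ε*k < t := lt_of_le_of_ne hlow (Ne.symm hne)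
      refine ⟨min (t - ε*k) (ε*(k+1) - t), by apply lt_min <;> linarith,
        fun s hs hsT => ?_⟩
      rw [Metric.mem_ball, Real.dist_eq, abs_lt] at hs
      have hs1 : ε*k < s := by
        have := hs.1
        have h2 := min_le_left (t - ε*k) (ε*(k+1) - t)
        linarith
      have hs2 : s < ε*(k+1) := by
        have := hs.2
        have h2 := min_le_right (t - ε*k) (ε*(k+1) - t)
        linarith
      rcases hsT with (rfl | ⟨m, rfl⟩) | ⟨j, rfl⟩
      · nlinarith [(by exact_mod_cast hk1 : (1:ℝ) ≤ (k:ℝ))]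
      · have hm1 : ε/2^m ≤ ε := div_le_self hε.le (one_le_pow₀ one_le_two)
        have : ε ≤ ε*k := by nlinarith [(by exact_mod_cast hk1 : (1:ℝ) ≤ (k:ℝ))]
        linarith
      · have hj1 : (k:ℝ) < (j:ℝ)+1 := (mul_lt_mul_iff_right₀ hε).1 hs1
        have hj2 : (j:ℝ)+1 < (k:ℝ)+1 := (mul_lt_mul_iff_right₀ hε).1 hs2
        have hj3 : k < j+1 := by exact_mod_cast hj1
        have hj4 : j+1 < k+1 := by exact_mod_cast hj2
        omega
  · refine countable_isTotallyDisconnected ?_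
    exact ((countable_singleton 0).union (countable_range _)).union (countable_range _)

lemma StronglyZeroDim.congr {X : Type*} {t1 t2 : TopologicalSpace X} (h : t1 = t2)
    (hX : @StronglyZeroDim X t2) : @StronglyZeroDim X t1 := h ▸ hX


/-- Theorem 1.1: for a strongly `0`-dimensional metrizable space `X`, the set of metrics
whose values lie in some closed totally disconnected subset of `[0,∞)` containing `0`
is a dense `Gδ` subset of `(Met(X), D_X)`. -/
theorem dense_Gδ_metrics_with_totally_disconnected_range
    {X : Type*} [TopologicalSpace X] [TopologicalSpace.MetrizableSpace X]
    (hX : StronglyZeroDim X) :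
    Dense { d : MetricCompat X | ∃ S ∈ ZFamily, ∀ x y : X, d.dist x y ∈ S } ∧
    IsGδ { d : MetricCompat X | ∃ S ∈ ZFamily, ∀ x y : X, d.dist x y ∈ S } := by
  constructor
  · rw [dense_iff_inter_open]
    intro U hU hUne
    obtain ⟨d, hd⟩ := hUne
    by_cases hXe : Nonempty X
    swap
    · refine ⟨d, hd, {0}, ⟨singleton_subset_iff.2 (mem_Ici.2 le_rfl), isClosed_singleton,
        fun T hT _ => subsingleton_singleton.anti hT, rfl⟩, fun x y => (hXe ⟨x⟩).elim⟩
    obtain ⟨r, hr, hball⟩ := MetricCompat.exists_ball_subset hU hd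
    obtain ⟨r', hr'1, hr'2⟩ := exists_between hr
    set c := r'.toReal with hc
    have hcpos : 0 < c := ENNReal.toReal_pos hr'1.ne' hr'2.ne_top
    have hε : 0 < c/9 := by linarith
    obtain ⟨e, he1, he2, he3, he4, he5, he6, he7⟩ :=
      @exists_close_dist X d.1 (StronglyZeroDim.congr d.2 hX) hXe _ hε
    set m' : MetricSpace X :=
      @MetricSpace.ofDistTopology X d.1.toUniformSpace.toTopologicalSpace e he1 he2 he3 he7 he4
      with hm'
    have htopeq : m'.toUniformSpace.toTopologicalSpace = d.1.toUniformSpace.toTopologicalSpace :=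
      rfl
    set e' : MetricCompat X := ⟨m', by rw [htopeq, d.2]⟩ with he'
    have hdist : ∀ x y, e'.dist x y = e x y := fun x y => rfl
    have hsup : MetricCompat.supDist d e' < r := by
      have h1 : MetricCompat.supDist d e' ≤ ENNReal.ofReal (4*(c/9)) := by
        apply MetricCompat.supDist_le
        intro x y
        rw [hdist, abs_sub_comm]
        exact he5 x y
      have h2 : ENNReal.ofReal (4*(c/9)) < ENNReal.ofReal c :=
        (ENNReal.ofReal_lt_ofReal_iff hcpos).2 (by linarith)
      have h3 : ENNReal.ofReal c = r' := ENNReal.ofReal_toReal hr'2.ne_top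
      exact lt_trans (lt_of_le_of_lt h1 (h3 ▸ h2)) hr'2
    exact ⟨e', hball e' hsup, TDSet (c/9), TDSet_mem_ZFamily hε, fun x y => he6 x y⟩
  · rw [target_eq]
    exact IsGδ.iInter_of_isOpen fun i => isOpen_gapSet _ _
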